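/- For any full set C ⊇ M, every M-f.s. sequence ⟨A_i : i ∈ I⟩ over C is an order-congruence over C: for all i* ∈ I, all i* ≤ i₁ < ⋯ < i_n and i* ≤ j₁ < ⋯ < j_n from I, and all tuples ā_k ∈ A_{i_k}, b̄_k ∈ A_{j_k} with tp(ā_k/C) = tp(b̄_k/C) for each k, we have tp(ā₁⋯ā_n / C A_{<i*}) = tp(b̄₁⋯b̄_n / C A_{<i*}). -/

import Mathlib

open FirstOrder FirstOrder.Language Cardinal Set

universe u v w

namespace MonadicNIP

variable {L : FirstOrder.Language.{u, u}} {C : Type u} [L.Structure C]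

/-- The complete type of the tuple `a` over the parameter set `B`:
all formulas with parameters from `B` and variables `α` satisfied by `a`. -/
def tpSet {α : Type v} (B : Set C) (a : α → C) : Set (L.Formula (B ⊕ α)) :=
  {φ | φ.Realize (Sum.elim (Subtype.val : B → C) a)}

/-- A set of formulas over `B` (a "type") is finitely satisfied in `M` if each of
its formulas is realized by a tuple from `M`. -/
def FinSat (M : Set C) {α : Type v} {B : Set C} (p : Set (L.Formula (B ⊕ α))) : Prop :=
  ∀ φ ∈ p, ∃ m : α → C, (∀ i, m i ∈ M) ∧
    Formula.Realize φ (Sum.elim (Subtype.val : B → C) m)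

/-- `p` is a complete type over `B` (in the monster `C`): finitely satisfiable
in `C` and deciding every formula. -/
def IsCompleteType {α : Type v} (B : Set C) (p : Set (L.Formula (B ⊕ α))) : Prop :=
  (∀ s : Finset (L.Formula (B ⊕ α)), ↑s ⊆ p →
      ∃ a : α → C, ∀ φ ∈ s, Formula.Realize φ (Sum.elim (Subtype.val : B → C) a)) ∧
    ∀ φ : L.Formula (B ⊕ α), φ ∈ p ∨ φ.not ∈ p

/-- `tp(A/B)` is finitely satisfied in `M` (formulated without an enumeration of `A`). -/
def SetFinSat (L : FirstOrder.Language.{u, u}) {C : Type u} [L.Structure C] (M B A : Set C) : Prop :=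
  ∀ (n : ℕ) (φ : L.Formula (B ⊕ Fin n)) (a : Fin n → C), (∀ i, a i ∈ A) →
    φ.Realize (Sum.elim (Subtype.val : B → C) a) →
    ∃ m : Fin n → C, (∀ i, m i ∈ M) ∧ φ.Realize (Sum.elim (Subtype.val : B → C) m)

/-- `⟨A i : i ∈ I⟩` is an `M`-f.s. sequence over `B`. -/
def IsFSSeq (L : FirstOrder.Language.{u, u}) {C : Type u} [L.Structure C] (M B : Set C) {I : Type v} [LinearOrder I] (A : I → Set C) : Prop :=
  ∀ i : I, SetFinSat L M (B ∪ ⋃ j < i, A j) (A i)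

/-- The average type of an ultrafilter `U` on `M^n` over the parameter set `B`. -/
def Av {n : ℕ} {M : Set C} (U : Ultrafilter (Fin n → M)) (B : Set C) :
    Set (L.Formula (B ⊕ Fin n)) :=
  {φ | {m : Fin n → M |
      Formula.Realize φ (Sum.elim (Subtype.val : B → C) (fun i => (m i : C)))} ∈ U}

/-- `C0` is full (for non-splitting over `M`): every complete type over `M`
in finitely many variables (realized in the monster) is realized in `C0`. -/
def IsFull (L : FirstOrder.Language.{u, u}) {C : Type u} [L.Structure C] (M C0 : Set C) : Prop :=
  ∀ (n : ℕ) (a : Fin n → C), ∃ c : Fin n → C, (∀ i, c i ∈ C0) ∧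
    tpSet (L := L) M a = tpSet (L := L) M c

/-- The sequence of tuples `a` is indiscernible over `B`. -/
def IndiscernibleOver (L : FirstOrder.Language.{u, u}) {C : Type u} [L.Structure C] {I : Type v} [LinearOrder I] {α : Type w} (B : Set C)
    (a : I → α → C) : Prop :=
  ∀ (n : ℕ) (i j : Fin n → I), StrictMono i → StrictMono j →
    tpSet (L := L) B (fun p : Fin n × α => a (i p.1) p.2) =
      tpSet (L := L) B (fun p : Fin n × α => a (j p.1) p.2)

/-- The type `p` over `B` does not split over `M0`: parameter tuples from `B`
with the same type over `M0` are interchangeable in `p`. -/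
def NotSplitOver (M0 : Set C) {B : Set C} {α : Type v}
    (p : Set (L.Formula (B ⊕ α))) : Prop :=
  ∀ (k : ℕ) (b b' : Fin k → B) (φ : L.Formula (Fin k ⊕ α)),
    tpSet (L := L) M0 (fun i => (b i : C)) = tpSet (L := L) M0 (fun i => (b' i : C)) →
    (φ.relabel (Sum.elim (fun i => Sum.inl (b i)) Sum.inr) ∈ p ↔
      φ.relabel (Sum.elim (fun i => Sum.inl (b' i)) Sum.inr) ∈ p)


section Aux

variable {α β γ : Type*}

/-- Two tuples have the same type over `B` (pointwise formulation). -/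
def EqTp (B : Set C) (a b : α → C) : Prop :=
  ∀ φ : L.Formula (B ⊕ α),
    φ.Realize (Sum.elim (Subtype.val : B → C) a) ↔
      φ.Realize (Sum.elim (Subtype.val : B → C) b)

theorem EqTp.symm {B : Set C} {a b : α → C} (h : EqTp (L := L) B a b) :
    EqTp (L := L) B b a := fun φ => (h φ).symm

theorem eqTp_of_tpSet {B : Set C} {a b : α → C}
    (h : tpSet (L := L) B a = tpSet (L := L) B b) : EqTp (L := L) B a b := by
  intro φ
  have := Set.ext_iff.1 h φ
  exact this

theorem tpSet_of_eqTp {B : Set C} {a b : α → C}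
    (h : EqTp (L := L) B a b) : tpSet (L := L) B a = tpSet (L := L) B b :=
  Set.ext fun φ => h φ

/-- The type of the tuple `a` over `B` is finitely satisfiable in `Mset`. -/
def FS (Mset B : Set C) (a : α → C) : Prop :=
  ∀ φ : L.Formula (B ⊕ α), φ.Realize (Sum.elim (Subtype.val : B → C) a) →
    ∃ m : α → C, (∀ i, m i ∈ Mset) ∧ φ.Realize (Sum.elim (Subtype.val : B → C) m)

theorem FS.mono {Mset B B' : Set C} {a : α → C} (h : FS (L := L) Mset B a)
    (hs : B' ⊆ B) : FS (L := L) Mset B' a := by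
  intro φ hφ
  have key : ∀ f : α → C,
      ((φ.relabel (Sum.map (Set.inclusion hs) id)).Realize
          (Sum.elim (Subtype.val : B → C) f)
        ↔ φ.Realize (Sum.elim (Subtype.val : B' → C) f)) := by
    intro f
    rw [Formula.realize_relabel]
    have : (Sum.elim (Subtype.val : B → C) f) ∘ Sum.map (Set.inclusion hs) id
        = Sum.elim (Subtype.val : B' → C) f := by
      funext z; rcases z with z | z <;> rfl
    rw [this]
  obtain ⟨m, hm, hm2⟩ := h _ ((key _).2 hφ)
  exact ⟨m, hm, (key _).1 hm2⟩

theorem setFinSat_fs {Mset B A : Set C} (h : SetFinSat L Mset B A)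
    [Fintype α] {a : α → C} (ha : ∀ i, a i ∈ A) : FS (L := L) Mset B a := by
  intro φ hφ
  classical
  let e : α ≃ Fin (Fintype.card α) := Fintype.equivFin α
  have key : ∀ f : α → C,
      ((φ.relabel (Sum.map id ⇑e)).Realize
          (Sum.elim (Subtype.val : B → C) (f ∘ ⇑e.symm))
        ↔ φ.Realize (Sum.elim (Subtype.val : B → C) f)) := by
    intro f
    rw [Formula.realize_relabel]
    have : Sum.elim (Subtype.val : B → C) (f ∘ ⇑e.symm) ∘ Sum.map id ⇑e
        = Sum.elim (Subtype.val : B → C) f := by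
      funext z; rcases z with z | z
      · rfl
      · simp
    rw [this]
  obtain ⟨m', hm', h2⟩ := h _ (φ.relabel (Sum.map id ⇑e)) (a ∘ ⇑e.symm)
    (fun i => ha _) ((key a).2 hφ)
  refine ⟨m' ∘ ⇑e, fun i => hm' _, ?_⟩
  have hmm : (m' ∘ ⇑e) ∘ ⇑e.symm = m' := by funext i; simp
  exact (key (m' ∘ ⇑e)).1 (by rw [hmm]; exact h2)

/-- Every formula over `β ⊕ α` uses only finitely many `β`-variables. -/
theorem exists_finite_support (φ : L.Formula (β ⊕ α)) :
    ∃ (k : ℕ) (e : Fin k → β) (ψ : L.Formula (Fin k ⊕ α)),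
      ∀ v : β ⊕ α → C, φ.Realize v ↔ ψ.Realize (v ∘ Sum.map e id) := by
  classical
  set s : Set (β ⊕ α) := ↑(BoundedFormula.freeVarFinset φ) with hs
  let t : Finset β := (BoundedFormula.freeVarFinset φ).preimage Sum.inl
    Sum.inl_injective.injOn
  let e : ↥t ≃ Fin t.card := t.equivFin
  let φ' : L.BoundedFormula ↥s 0 :=
    BoundedFormula.restrictFreeVar φ (Set.inclusion (Set.Subset.rfl))
  let h : ↥s → Fin t.card ⊕ α := fun z =>
    match z with
    | ⟨Sum.inl b, hb⟩ => Sum.inl (e ⟨b, by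
        simp only [t, Finset.mem_preimage]
        exact hb⟩)
    | ⟨Sum.inr a, _⟩ => Sum.inr a
  refine ⟨t.card, fun i => ((e.symm i : ↥t) : β),
    (Formula.relabel h φ'), fun v => ?_⟩
  rw [Formula.realize_relabel]
  have hcomp : (v ∘ Sum.map (fun i => ((e.symm i : ↥t) : β)) id) ∘ h
      = v ∘ (Subtype.val : ↥s → β ⊕ α) := by
    funext z
    obtain ⟨z, hz⟩ := z
    rcases z with b | a
    · have hb : b ∈ t := by
        simp only [t, Finset.mem_preimage]; exact hz
      show v (Sum.map _ id (Sum.inl (e ⟨b, _⟩))) = v (Sum.inl b)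
      simp
    · rfl
  rw [hcomp]
  exact (BoundedFormula.realize_restrictFreeVar' (Set.Subset.rfl)).symm

theorem realize_param_relabel {E : Set C} {k : ℕ} (ψ : L.Formula (Fin k ⊕ α))
    (w : Fin k → E) (f : α → C) :
    (ψ.relabel (Sum.map w id)).Realize (Sum.elim (Subtype.val : E → C) f) ↔
      ψ.Realize (Sum.elim (fun i => ((w i : C))) f) := by
  rw [Formula.realize_relabel]
  have : Sum.elim (Subtype.val : E → C) f ∘ Sum.map w id
      = Sum.elim (fun i => ((w i : C))) f := by
    funext z; rcases z with z | z <;> rfl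
  rw [this]

theorem swap_params {Mset E : Set C} {k : ℕ} {x : α → C}
    (hFS : FS (L := L) Mset E x) (ψ : L.Formula (Fin k ⊕ α)) (u v : Fin k → E)
    (htp : tpSet (L := L) Mset (fun i => ((u i : C))) =
      tpSet (L := L) Mset (fun i => ((v i : C))))
    (h1 : ψ.Realize (Sum.elim (fun i => ((u i : C))) x)) :
    ψ.Realize (Sum.elim (fun i => ((v i : C))) x) := by
  by_contra h2
  set θ : L.Formula (E ⊕ α) :=
    (ψ.relabel (Sum.map u id)) ⊓ (ψ.relabel (Sum.map v id)).not with hθdef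
  have hθ : θ.Realize (Sum.elim (Subtype.val : E → C) x) := by
    rw [hθdef, Formula.realize_inf, Formula.realize_not,
      realize_param_relabel, realize_param_relabel]
    exact ⟨h1, h2⟩
  obtain ⟨m, hm, hmθ⟩ := hFS θ hθ
  rw [hθdef, Formula.realize_inf, Formula.realize_not,
    realize_param_relabel, realize_param_relabel] at hmθ
  set χ : L.Formula (Mset ⊕ Fin k) :=
    ψ.relabel (Sum.elim (fun i => Sum.inr i)
      (fun j => Sum.inl (⟨m j, hm j⟩ : Mset))) with hχdef
  have hχ : ∀ w : Fin k → C,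
      χ.Realize (Sum.elim (Subtype.val : Mset → C) w) ↔
        ψ.Realize (Sum.elim w m) := by
    intro w
    rw [hχdef, Formula.realize_relabel]
    have : Sum.elim (Subtype.val : Mset → C) w ∘
        (Sum.elim (fun i => Sum.inr i)
          (fun j => Sum.inl (⟨m j, hm j⟩ : Mset)))
        = Sum.elim w m := by
      funext z; rcases z with z | z <;> rfl
    rw [this]
  have h3 : χ ∈ tpSet (L := L) Mset (fun i => ((u i : C))) := (hχ _).2 hmθ.1
  rw [htp] at h3
  exact hmθ.2 ((hχ _).1 h3)

theorem swap_single {Mset C0 E : Set C} (hMC : Mset ⊆ C0) (hCE : C0 ⊆ E)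
    (hfull : IsFull L Mset C0) {x y : α → C}
    (hFSx : FS (L := L) Mset E x) (hFSy : FS (L := L) Mset E y)
    (hxy : EqTp (L := L) C0 x y) : EqTp (L := L) E x y := by
  intro φ
  obtain ⟨k, e, ψ, hψ⟩ := exists_finite_support (C := C) φ
  have hψ' : ∀ f : α → C,
      φ.Realize (Sum.elim (Subtype.val : E → C) f) ↔
        ψ.Realize (Sum.elim (fun i => ((e i : C))) f) := by
    intro f
    rw [hψ]
    have : Sum.elim (Subtype.val : E → C) f ∘ Sum.map e id
        = Sum.elim (fun i => ((e i : C))) f := by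
      funext z; rcases z with z | z <;> rfl
    rw [this]
  obtain ⟨c, hc, htpc⟩ := hfull k (fun i => ((e i : C)))
  set vv : Fin k → E := fun i => ⟨c i, hCE (hc i)⟩ with hvvdef
  have htpc' : tpSet (L := L) Mset (fun i => ((e i : C))) =
      tpSet (L := L) Mset (fun i => ((vv i : C))) := htpc
  have hmid : ψ.Realize (Sum.elim (fun i => ((vv i : C))) x) ↔
      ψ.Realize (Sum.elim (fun i => ((vv i : C))) y) := by
    set c0 : Fin k → C0 := fun i => ⟨c i, hc i⟩ with hc0def
    have h0 := hxy (ψ.relabel (Sum.map c0 id))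
    rw [realize_param_relabel, realize_param_relabel] at h0
    exact h0
  constructor
  · intro h
    have h1 := (hψ' x).1 h
    have h2 := swap_params hFSx ψ e vv htpc' h1
    have h3 := hmid.1 h2
    have h4 := swap_params hFSy ψ vv e htpc'.symm h3
    exact (hψ' y).2 h4
  · intro h
    have h1 := (hψ' y).1 h
    have h2 := swap_params hFSy ψ e vv htpc' h1
    have h3 := hmid.2 h2
    have h4 := swap_params hFSx ψ vv e htpc'.symm h3
    exact (hψ' x).2 h4

/-- The relabeling moving the head tuple `x` into the parameter set `B'`. -/
theorem realize_head_relabel {B B' : Set C} (hBB' : B ⊆ B') {x : β → C}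
    (hx : ∀ i, x i ∈ B') (φ : L.Formula (B ⊕ (β ⊕ γ))) (f : γ → C) :
    (φ.relabel (Sum.elim (fun p => Sum.inl (Set.inclusion hBB' p))
        (Sum.elim (fun i => Sum.inl (⟨x i, hx i⟩ : B')) (fun j => Sum.inr j)))).Realize
      (Sum.elim (Subtype.val : B' → C) f) ↔
      φ.Realize (Sum.elim (Subtype.val : B → C) (Sum.elim x f)) := by
  rw [Formula.realize_relabel]
  have : Sum.elim (Subtype.val : B' → C) f ∘
      (Sum.elim (fun p => Sum.inl (Set.inclusion hBB' p))
        (Sum.elim (fun i => Sum.inl (⟨x i, hx i⟩ : B')) (fun j => Sum.inr j)))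
      = Sum.elim (Subtype.val : B → C) (Sum.elim x f) := by
    funext z
    rcases z with z | z
    · rfl
    · rcases z with z | z <;> rfl
  rw [this]

theorem head_to_base {B B' : Set C} (hBB' : B ⊆ B') {x : β → C}
    (hx : ∀ i, x i ∈ B') {t t' : γ → C} (h : EqTp (L := L) B' t t') :
    EqTp (L := L) B (Sum.elim x t) (Sum.elim x t') := by
  intro φ
  have key := h (φ.relabel (Sum.elim (fun p => Sum.inl (Set.inclusion hBB' p))
    (Sum.elim (fun i => Sum.inl (⟨x i, hx i⟩ : B')) (fun j => Sum.inr j))))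
  rw [realize_head_relabel hBB' hx φ t, realize_head_relabel hBB' hx φ t'] at key
  exact key

theorem swap_head_aux {Mset B B' : Set C} (hMB : Mset ⊆ B) (hBB' : B ⊆ B')
    {x y : β → C} {t : γ → C} (hx : ∀ i, x i ∈ B') (hy : ∀ i, y i ∈ B')
    (hxy : EqTp (L := L) B x y) (hFS : FS (L := L) Mset B' t)
    (φ : L.Formula (B ⊕ (β ⊕ γ)))
    (h : φ.Realize (Sum.elim (Subtype.val : B → C) (Sum.elim x t))) :
    φ.Realize (Sum.elim (Subtype.val : B → C) (Sum.elim y t)) := by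
  by_contra hn
  set θ : L.Formula (B' ⊕ γ) :=
    (φ.relabel (Sum.elim (fun p => Sum.inl (Set.inclusion hBB' p))
      (Sum.elim (fun i => Sum.inl (⟨x i, hx i⟩ : B')) (fun j => Sum.inr j)))) ⊓
    (φ.relabel (Sum.elim (fun p => Sum.inl (Set.inclusion hBB' p))
      (Sum.elim (fun i => Sum.inl (⟨y i, hy i⟩ : B')) (fun j => Sum.inr j)))).not
    with hθdef
  have hθ : θ.Realize (Sum.elim (Subtype.val : B' → C) t) := by
    rw [hθdef, Formula.realize_inf, Formula.realize_not,
      realize_head_relabel hBB' hx φ t, realize_head_relabel hBB' hy φ t]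
    exact ⟨h, hn⟩
  obtain ⟨m, hm, hmθ⟩ := hFS θ hθ
  rw [hθdef, Formula.realize_inf, Formula.realize_not,
    realize_head_relabel hBB' hx φ m, realize_head_relabel hBB' hy φ m] at hmθ
  set χ : L.Formula (B ⊕ β) :=
    φ.relabel (Sum.elim (fun p => Sum.inl p)
      (Sum.elim (fun i => Sum.inr i) (fun j => Sum.inl (⟨m j, hMB (hm j)⟩ : B))))
    with hχdef
  have hχ : ∀ w : β → C,
      χ.Realize (Sum.elim (Subtype.val : B → C) w) ↔
        φ.Realize (Sum.elim (Subtype.val : B → C) (Sum.elim w m)) := by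
    intro w
    rw [hχdef, Formula.realize_relabel]
    have : Sum.elim (Subtype.val : B → C) w ∘
        (Sum.elim (fun p => Sum.inl p)
          (Sum.elim (fun i => Sum.inr i)
            (fun j => Sum.inl (⟨m j, hMB (hm j)⟩ : B))))
        = Sum.elim (Subtype.val : B → C) (Sum.elim w m) := by
      funext z
      rcases z with z | z
      · rfl
      · rcases z with z | z <;> rfl
    rw [this]
  have := hxy χ
  exact hmθ.2 ((hχ y).1 (this.1 ((hχ x).2 hmθ.1)))

theorem swap_head {Mset B B' : Set C} (hMB : Mset ⊆ B) (hBB' : B ⊆ B')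
    {x y : β → C} {t : γ → C} (hx : ∀ i, x i ∈ B') (hy : ∀ i, y i ∈ B')
    (hxy : EqTp (L := L) B x y) (hFS : FS (L := L) Mset B' t) :
    EqTp (L := L) B (Sum.elim x t) (Sum.elim y t) := fun φ =>
  ⟨swap_head_aux hMB hBB' hx hy hxy hFS φ,
    swap_head_aux hMB hBB' hy hx hxy.symm hFS φ⟩

theorem EqTp.comp {B : Set C} {a b : α → C} (h : EqTp (L := L) B a b)
    (g : γ → α) : EqTp (L := L) B (a ∘ g) (b ∘ g) := by
  intro φ
  have key : ∀ f : α → C,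
      (φ.relabel (Sum.map id g)).Realize (Sum.elim (Subtype.val : B → C) f) ↔
        φ.Realize (Sum.elim (Subtype.val : B → C) (f ∘ g)) := by
    intro f
    rw [Formula.realize_relabel]
    have : Sum.elim (Subtype.val : B → C) f ∘ Sum.map id g
        = Sum.elim (Subtype.val : B → C) (f ∘ g) := by
      funext z; rcases z with z | z <;> rfl
    rw [this]
  have := h (φ.relabel (Sum.map id g))
  rw [key a, key b] at this
  exact this

end Aux

section Main

variable {I : Type v} [LinearOrder I]

theorem step (Mset C0 : Set C) (hMC : Mset ⊆ C0) (hfull : IsFull L Mset C0)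
    (A : I → Set C) (hfs : IsFSSeq L Mset C0 A) (istar : I) (n : ℕ)
    (IH : ∀ (idx jdx : Fin n → I), StrictMono idx → StrictMono jdx →
      (∀ k, istar ≤ idx k) → (∀ k, istar ≤ jdx k) →
      ∀ (m : Fin n → ℕ) (a b : (k : Fin n) → Fin (m k) → C),
        (∀ k t, a k t ∈ A (idx k)) → (∀ k t, b k t ∈ A (jdx k)) →
        (∀ k, tpSet (L := L) C0 (a k) = tpSet (L := L) C0 (b k)) →
        EqTp (L := L) (C0 ∪ ⋃ j < istar, A j)
          (fun p : Σ k : Fin n, Fin (m k) => a p.1 p.2)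
          (fun p : Σ k : Fin n, Fin (m k) => b p.1 p.2))
    (idx jdx : Fin (n+1) → I) (hi : StrictMono idx) (hj : StrictMono jdx)
    (hii : ∀ k, istar ≤ idx k) (hjj : ∀ k, istar ≤ jdx k)
    (m : Fin (n+1) → ℕ) (a b : (k : Fin (n+1)) → Fin (m k) → C)
    (ha : ∀ k t, a k t ∈ A (idx k)) (hb : ∀ k t, b k t ∈ A (jdx k))
    (htp : ∀ k, tpSet (L := L) C0 (a k) = tpSet (L := L) C0 (b k))
    (hle : idx (Fin.last n) ≤ jdx (Fin.last n)) :
    EqTp (L := L) (C0 ∪ ⋃ j < istar, A j)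
      (fun p : Σ k : Fin (n+1), Fin (m k) => a p.1 p.2)
      (fun p : Σ k : Fin (n+1), Fin (m k) => b p.1 p.2) := by
  classical
  set D : Set C := C0 ∪ ⋃ j < istar, A j with hD
  let x : (Σ k : Fin n, Fin (m (Fin.castSucc k))) → C := fun p => a p.1.castSucc p.2
  let y : (Σ k : Fin n, Fin (m (Fin.castSucc k))) → C := fun p => b p.1.castSucc p.2
  let ta : Fin (m (Fin.last n)) → C := a (Fin.last n)
  let tb : Fin (m (Fin.last n)) → C := b (Fin.last n)
  let E : Set C := D ∪ ⋃ k : Fin n, Set.range (a (Fin.castSucc k))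
  have hC0D : C0 ⊆ D := Set.subset_union_left
  have hDE : D ⊆ E := Set.subset_union_left
  have hEi : E ⊆ C0 ∪ ⋃ j < idx (Fin.last n), A j := by
    intro z hz
    rcases hz with hz | hz
    · rcases hz with hz | hz
      · exact Or.inl hz
      · obtain ⟨j, hjlt, hzj⟩ := Set.mem_iUnion₂.1 hz
        exact Or.inr (Set.mem_iUnion₂.2 ⟨j, lt_of_lt_of_le hjlt (hii _), hzj⟩)
    · obtain ⟨k, hk⟩ := Set.mem_iUnion.1 hz
      obtain ⟨t, ht⟩ := hk
      exact Or.inr (Set.mem_iUnion₂.2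
        ⟨idx (Fin.castSucc k), hi (Fin.castSucc_lt_last k), ht ▸ ha _ t⟩)
  have hEj : E ⊆ C0 ∪ ⋃ j < jdx (Fin.last n), A j := by
    intro z hz
    rcases hz with hz | hz
    · rcases hz with hz | hz
      · exact Or.inl hz
      · obtain ⟨j, hjlt, hzj⟩ := Set.mem_iUnion₂.1 hz
        exact Or.inr (Set.mem_iUnion₂.2 ⟨j, lt_of_lt_of_le hjlt (hjj _), hzj⟩)
    · obtain ⟨k, hk⟩ := Set.mem_iUnion.1 hz
      obtain ⟨t, ht⟩ := hk
      exact Or.inr (Set.mem_iUnion₂.2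
        ⟨idx (Fin.castSucc k),
          lt_of_lt_of_le (hi (Fin.castSucc_lt_last k)) hle, ht ▸ ha _ t⟩)
  have hFSta : FS (L := L) Mset E ta :=
    (setFinSat_fs (hfs (idx (Fin.last n))) (fun t => ha _ t)).mono hEi
  have hFStb : FS (L := L) Mset E tb :=
    (setFinSat_fs (hfs (jdx (Fin.last n))) (fun t => hb _ t)).mono hEj
  have h1 : EqTp (L := L) E ta tb :=
    swap_single hMC (hC0D.trans hDE) hfull hFSta hFStb
      (eqTp_of_tpSet (htp (Fin.last n)))
  have hxE : ∀ p : (Σ k : Fin n, Fin (m (Fin.castSucc k))), x p ∈ E :=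
    fun p => Or.inr (Set.mem_iUnion.2 ⟨p.1, Set.mem_range_self p.2⟩)
  have h2 : EqTp (L := L) D (Sum.elim x ta) (Sum.elim x tb) :=
    head_to_base hDE hxE h1
  have h3 : EqTp (L := L) D x y := by
    have := IH (fun k => idx (Fin.castSucc k)) (fun k => jdx (Fin.castSucc k))
      (fun k1 k2 hk => hi (Fin.castSucc_lt_castSucc_iff.2 hk))
      (fun k1 k2 hk => hj (Fin.castSucc_lt_castSucc_iff.2 hk))
      (fun k => hii _) (fun k => hjj _)
      (fun k => m (Fin.castSucc k)) (fun k => a (Fin.castSucc k))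
      (fun k => b (Fin.castSucc k))
      (fun k t => ha _ t) (fun k t => hb _ t) (fun k => htp _)
    exact this
  have hxB : ∀ p : (Σ k : Fin n, Fin (m (Fin.castSucc k))),
      x p ∈ (C0 ∪ ⋃ j < jdx (Fin.last n), A j) :=
    fun p => Or.inr (Set.mem_iUnion₂.2 ⟨idx (Fin.castSucc p.1),
      lt_of_lt_of_le (hi (Fin.castSucc_lt_last p.1)) hle, ha _ p.2⟩)
  have hyB : ∀ p : (Σ k : Fin n, Fin (m (Fin.castSucc k))),
      y p ∈ (C0 ∪ ⋃ j < jdx (Fin.last n), A j) :=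
    fun p => Or.inr (Set.mem_iUnion₂.2 ⟨jdx (Fin.castSucc p.1),
      hj (Fin.castSucc_lt_last p.1), hb _ p.2⟩)
  have hDB : D ⊆ C0 ∪ ⋃ j < jdx (Fin.last n), A j := by
    intro z hz
    rcases hz with hz | hz
    · exact Or.inl hz
    · obtain ⟨j, hjlt, hzj⟩ := Set.mem_iUnion₂.1 hz
      exact Or.inr (Set.mem_iUnion₂.2 ⟨j, lt_of_lt_of_le hjlt (hjj _), hzj⟩)
  have h4 : EqTp (L := L) D (Sum.elim x tb) (Sum.elim y tb) :=
    swap_head (hMC.trans hC0D) hDB hxB hyB h3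
      (setFinSat_fs (hfs (jdx (Fin.last n))) (fun t => hb _ t))
  have h5 : EqTp (L := L) D (Sum.elim x ta) (Sum.elim y tb) :=
    fun φ => (h2 φ).trans (h4 φ)
  let g : (Σ k : Fin (n+1), Fin (m k)) →
      (Σ k : Fin n, Fin (m (Fin.castSucc k))) ⊕ Fin (m (Fin.last n)) :=
    fun p => Fin.lastCases (motive := fun k => Fin (m k) →
        (Σ k : Fin n, Fin (m (Fin.castSucc k))) ⊕ Fin (m (Fin.last n)))
      (fun t => Sum.inr t) (fun k t => Sum.inl ⟨k, t⟩) p.1 p.2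
  have h6 := h5.comp g
  have hga : ∀ (k : Fin (n+1)) (t : Fin (m k)), (Sum.elim x ta) (g ⟨k, t⟩) = a k t := by
    intro k
    induction k using Fin.lastCases with
    | last => intro t; simp [g, ta]
    | cast k => intro t; simp [g, x]
  have hgb : ∀ (k : Fin (n+1)) (t : Fin (m k)), (Sum.elim y tb) (g ⟨k, t⟩) = b k t := by
    intro k
    induction k using Fin.lastCases with
    | last => intro t; simp [g, tb]
    | cast k => intro t; simp [g, y]
  have ea : (Sum.elim x ta) ∘ g = fun p : Σ k : Fin (n+1), Fin (m k) => a p.1 p.2 := by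
    funext p; obtain ⟨k, t⟩ := p; exact hga k t
  have eb : (Sum.elim y tb) ∘ g = fun p : Σ k : Fin (n+1), Fin (m k) => b p.1 p.2 := by
    funext p; obtain ⟨k, t⟩ := p; exact hgb k t
  rw [ea, eb] at h6
  exact h6

theorem main_aux (Mset C0 : Set C) (hMC : Mset ⊆ C0) (hfull : IsFull L Mset C0)
    (A : I → Set C) (hfs : IsFSSeq L Mset C0 A) (istar : I) :
    ∀ (n : ℕ) (idx jdx : Fin n → I), StrictMono idx → StrictMono jdx →
      (∀ k, istar ≤ idx k) → (∀ k, istar ≤ jdx k) →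
      ∀ (m : Fin n → ℕ) (a b : (k : Fin n) → Fin (m k) → C),
        (∀ k t, a k t ∈ A (idx k)) → (∀ k t, b k t ∈ A (jdx k)) →
        (∀ k, tpSet (L := L) C0 (a k) = tpSet (L := L) C0 (b k)) →
        EqTp (L := L) (C0 ∪ ⋃ j < istar, A j)
          (fun p : Σ k : Fin n, Fin (m k) => a p.1 p.2)
          (fun p : Σ k : Fin n, Fin (m k) => b p.1 p.2) := by
  intro n
  induction n with
  | zero =>
    intro idx jdx _ _ _ _ m a b _ _ _
    intro φ
    have : (fun p : Σ k : Fin 0, Fin (m k) => a p.1 p.2)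
        = fun p : Σ k : Fin 0, Fin (m k) => b p.1 p.2 := by
      funext p; exact p.1.elim0
    rw [this]
  | succ n IHn =>
    intro idx jdx hi hj hii hjj m a b ha hb htp
    rcases le_total (idx (Fin.last n)) (jdx (Fin.last n)) with hle | hle
    · exact step Mset C0 hMC hfull A hfs istar n IHn idx jdx hi hj hii hjj
        m a b ha hb htp hle
    · exact (step Mset C0 hMC hfull A hfs istar n IHn jdx idx hj hi hjj hii
        m b a hb ha (fun k => (htp k).symm) hle).symm

end Main

/-- Every `M`-f.s. sequence over a full `C0 ⊇ M` is an order-congruence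
over `C0`. -/
theorem statement10 (M : L.ElementarySubstructure C) (C0 : Set C)
    (hMC : (M : Set C) ⊆ C0) (hfull : IsFull L (M : Set C) C0)
    {I : Type v} [LinearOrder I] (A : I → Set C)
    (hfs : IsFSSeq L (M : Set C) C0 A)
    (istar : I) (n : ℕ) (idx jdx : Fin n → I)
    (hi : StrictMono idx) (hj : StrictMono jdx)
    (hii : ∀ k, istar ≤ idx k) (hjj : ∀ k, istar ≤ jdx k)
    (m : Fin n → ℕ) (a b : (k : Fin n) → Fin (m k) → C)
    (ha : ∀ k t, a k t ∈ A (idx k)) (hb : ∀ k t, b k t ∈ A (jdx k))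
    (htp : ∀ k, tpSet (L := L) C0 (a k) = tpSet (L := L) C0 (b k)) :
    tpSet (L := L) (C0 ∪ ⋃ j < istar, A j)
        (fun p : Σ k : Fin n, Fin (m k) => a p.1 p.2) =
      tpSet (L := L) (C0 ∪ ⋃ j < istar, A j)
        (fun p : Σ k : Fin n, Fin (m k) => b p.1 p.2) := by
  exact tpSet_of_eqTp (main_aux (M : Set C) C0 hMC hfull A hfs istar n idx jdx
    hi hj hii hjj m a b ha hb htp)

end MonadicNIP
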